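/- Let q ≥ 2 and let m be an integer with m ≥ 5 or m = 3. Then F(P,ℚ) is the internal direct sum V_0 ⊕ Ker W, i.e., every η ∈ F(P,ℚ) decomposes uniquely as η = η_0 + η_1 with η_0 ∈ Ker W and η_1 ∈ V_0. -/

import Mathlib

/-- Partitions of `Fin m` are represented as finsets of finsets. -/
abbrev Ptn (m : ℕ) := Finset (Finset (Fin m))

/-- `α` is a partition of `Fin m`: all classes are nonempty and every element
belongs to exactly one class. -/
def IsPartition {m : ℕ} (α : Ptn m) : Prop :=
  (∀ c ∈ α, c.Nonempty) ∧ ∀ i : Fin m, ∃! c, c ∈ α ∧ i ∈ c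

/-- `P`: the set of partitions of `M = Fin m` into at most `q` nonempty classes. -/
def Pset (m q : ℕ) : Set (Ptn m) :=
  {α | IsPartition α ∧ α.card ≤ q}

/-- `P₂`: the partitions of the form `{{i,j}, M ∖ {i,j}}` for 2-element subsets `{i,j}`. -/
def P2set (m : ℕ) : Set (Ptn m) :=
  {α | ∃ p : Finset (Fin m), p.card = 2 ∧ α = {p, pᶜ}}

/-- `O` as a set: the 2-element subsets of `M = Fin m`. -/
def Oset (m : ℕ) : Set (Finset (Fin m)) := {p | p.card = 2}

/-- `O` as a type: the 2-element subsets of `M = Fin m`. -/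
abbrev OO (m : ℕ) := {p : Finset (Fin m) // p.card = 2}

/-- `P` as a type. -/
abbrev PP (m q : ℕ) := {α : Ptn m // α ∈ Pset m q}

noncomputable instance (m q : ℕ) : Fintype (PP m q) := Fintype.ofFinite _

/-- The canonical action of `S(M)` on partitions: `g({c₁,…,cₜ}) = {g(c₁),…,g(cₜ)}`. -/
def permPart {m : ℕ} (g : Equiv.Perm (Fin m)) (α : Ptn m) : Ptn m :=
  α.image fun c => c.image g

/-- The canonical action of `S(M)` on subsets of `M`. -/
def permPair {m : ℕ} (g : Equiv.Perm (Fin m)) (p : Finset (Fin m)) : Finset (Fin m) :=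
  p.image g

/-- `H` is closed under the action `act` on `S` if every `g` that maps each
`H`-orbit of `S` onto itself belongs to `H`. -/
def ClosedUnder {m : ℕ} {X : Type*} (act : Equiv.Perm (Fin m) → X → X) (S : Set X)
    (H : Set (Equiv.Perm (Fin m))) : Prop :=
  ∀ g : Equiv.Perm (Fin m), (∀ x ∈ S, ∃ h ∈ H, act g x = act h x) → g ∈ H

section Code

variable {m n : ℕ} {A : Type*} [Fintype A] [DecidableEq A]

/-- A map `h : Aⁿ → Aⁿ` is monomial if `h(a) = (σ₁(a_{π(1)}), …, σₙ(a_{π(n)}))`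
for a permutation `π ∈ Sₙ` and permutations `σ₁,…,σₙ` of `A`. -/
def IsMonomial (h : (Fin n → A) → (Fin n → A)) : Prop :=
  ∃ (π : Equiv.Perm (Fin n)) (σ : Fin n → Equiv.Perm A),
    ∀ (a : Fin n → A) (k : Fin n), h a k = σ k (a (π k))

/-- `Iso(C)`: the permutations `g` of the messages such that `λ ∘ g ∘ λ⁻¹` is a
Hamming isometry of the code encoded by `lam`. -/
def IsoSet (lam : Fin m → Fin n → A) : Set (Equiv.Perm (Fin m)) :=
  {g | ∀ i j : Fin m, hammingDist (lam (g i)) (lam (g j)) = hammingDist (lam i) (lam j)}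

/-- `Mon(C)`: the elements of `Iso(C)` such that `λ ∘ g ∘ λ⁻¹` extends to a
monomial map of `Aⁿ`. -/
def MonSet (lam : Fin m → Fin n → A) : Set (Equiv.Perm (Fin m)) :=
  {g | g ∈ IsoSet lam ∧
    ∃ h : (Fin n → A) → (Fin n → A), IsMonomial h ∧ ∀ i : Fin m, h (lam i) = lam (g i)}

/-- `Ψ(x) = {x⁻¹(a) : a ∈ A} ∖ {∅}`, the partition of `M` induced by `x : M → A`. -/
def PsiF (x : Fin m → A) : Ptn m :=
  (Finset.univ.image fun a : A => Finset.univ.filter fun i : Fin m => x i = a).erase ∅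

/-- The multiplicity function `η_λ(α) = |{k : Ψ(λ_k) = α}|`. -/
def eta (lam : Fin m → Fin n → A) (α : Ptn m) : ℚ :=
  (((Finset.univ : Finset (Fin n)).filter fun k => PsiF (fun i => lam i k) = α).card : ℚ)

/-- The multiplicity function, restricted to `P`. -/
def etaP (q : ℕ) (lam : Fin m → Fin n → A) : PP m q → ℚ := fun α => eta lam α.1

end Code

open Classical in
/-- `Δ_α({i,j}) = 0` if `i` and `j` lie in the same class of `α`, and `1` otherwise. -/
noncomputable def Delta {m q : ℕ} (α : PP m q) (p : OO m) : ℚ :=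
  if ∃ c ∈ α.1, p.1 ⊆ c then 0 else 1

/-- The linear map `W : F(P,ℚ) → F(O,ℚ)`, `W(η)(p) = Σ_{α∈P} η(α)Δ_α(p)`. -/
noncomputable def WLin (m q : ℕ) : (PP m q → ℚ) →ₗ[ℚ] (OO m → ℚ) where
  toFun η := fun p => ∑ α : PP m q, η α * Delta α p
  map_add' x y := by
    funext p
    simp [add_mul, Finset.sum_add_distrib]
  map_smul' c x := by
    funext p
    simp [Finset.mul_sum, mul_assoc]

/-- The matrix `B`: `B_{p,t} = 1` if `|p ∩ t| = 1`, and `0` otherwise. -/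
def Bmat (m : ℕ) : Matrix (OO m) (OO m) ℚ :=
  Matrix.of fun p t => if (p.1 ∩ t.1).card = 1 then 1 else 0

/-- The matrix `D`: `2(m−2)(m−4)·D_{p,t}` equals `−m²+8m−14` if `p = t`,
`m−4` if `|p∩t| = 1`, and `−2` if `p ∩ t = ∅`. -/
def Dmat (m : ℕ) : Matrix (OO m) (OO m) ℚ :=
  Matrix.of fun p t =>
    (if p = t then -(m : ℚ) ^ 2 + 8 * m - 14
      else if (p.1 ∩ t.1).card = 1 then (m : ℚ) - 4 else -2) /
      (2 * ((m : ℚ) - 2) * ((m : ℚ) - 4))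

/-- `ξ_x = Σ_{r∈O} x(r) Σ_{p∈O} D_{r,p} · id_{{p, M∖p}}`. -/
noncomputable def xi (m q : ℕ) (x : OO m → ℚ) : PP m q → ℚ := fun α =>
  ∑ r : OO m, x r * ∑ p : OO m, Dmat m r p * (if α.1 = ({p.1, p.1ᶜ} : Ptn m) then 1 else 0)

/-- `ζ_α = id_α − ξ_{Δ_α}`. -/
noncomputable def zeta (m q : ℕ) (α : PP m q) : PP m q → ℚ :=
  (fun β => if β = α then 1 else 0) - xi m q fun p => Delta α p

/-- `V₀`: the functions in `F(P,ℚ)` vanishing on `P ∖ P₂`. -/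
def V0 (m q : ℕ) : Set (PP m q → ℚ) :=
  {η | ∀ α : PP m q, (α : Ptn m) ∉ P2set m → η α = 0}

open Classical in
/-- `id_{P₂} = Σ_{α∈P₂} id_α`. -/
noncomputable def idP2 (m q : ℕ) : PP m q → ℚ := fun α =>
  if (α : Ptn m) ∈ P2set m then 1 else 0

theorem permPart_mem_Pset {m q : ℕ} (g : Equiv.Perm (Fin m)) {α : Ptn m}
    (hα : α ∈ Pset m q) : permPart g α ∈ Pset m q := by
  obtain ⟨⟨hne, huniq⟩, hcard⟩ := hα
  refine ⟨⟨?_, ?_⟩, le_trans Finset.card_image_le hcard⟩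
  · intro c hc
    simp only [permPart, Finset.mem_image] at hc
    obtain ⟨d, hd, rfl⟩ := hc
    exact (hne d hd).image g
  · intro i
    obtain ⟨c, ⟨hc, hic⟩, hun⟩ := huniq (g.symm i)
    refine ⟨c.image g, ⟨?_, ?_⟩, ?_⟩
    · simp only [permPart, Finset.mem_image]
      exact ⟨c, hc, rfl⟩
    · exact Finset.mem_image.2 ⟨g.symm i, hic, g.apply_symm_apply i⟩
    · rintro d ⟨hd, hid⟩
      simp only [permPart, Finset.mem_image] at hd
      obtain ⟨e, he, rfl⟩ := hd
      rw [Finset.mem_image] at hid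
      obtain ⟨j, hj, hji⟩ := hid
      have hjs : j = g.symm i := by
        apply g.injective
        rw [hji, g.apply_symm_apply]
      subst hjs
      rw [hun e ⟨he, hj⟩]

/-- The action of `S(M)` on `P`. -/
def permPP {m q : ℕ} (g : Equiv.Perm (Fin m)) (α : PP m q) : PP m q :=
  ⟨permPart g α.1, permPart_mem_Pset g α.2⟩

/-- The action of `S(M)` on `F(P,ℚ)`: `g(η)(α) = η(g⁻¹(α))`. -/
def permF {m q : ℕ} (g : Equiv.Perm (Fin m)) (η : PP m q → ℚ) : PP m q → ℚ :=
  fun α => η (permPP g⁻¹ α)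

/-- `Stab(η) = {g ∈ S(M) : g(η) = η}`. -/
def StabSet {m q : ℕ} (η : PP m q → ℚ) : Set (Equiv.Perm (Fin m)) :=
  {g | permF g η = η}

/-- `Stab_W(η) = {g ∈ S(M) : W(g(η)) = W(η)}`. -/
def StabWSet (m q : ℕ) (η : PP m q → ℚ) : Set (Equiv.Perm (Fin m)) :=
  {g | WLin m q (permF g η) = WLin m q η}

/-! ### Auxiliary material for the direct-sum theorem -/

section AuxMatrices

open Matrix Finset

variable {m : ℕ}

/-- Incidence matrix between pairs and points. -/
noncomputable def Tmat (m : ℕ) : Matrix (OO m) (Fin m) ℚ :=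
  Matrix.of fun p i => if i ∈ p.1 then 1 else 0

/-- Intersection-cardinality matrix. -/
noncomputable def Nmat (m : ℕ) : Matrix (OO m) (OO m) ℚ :=
  Matrix.of fun p t => ((p.1 ∩ t.1).card : ℚ)

/-- All-ones matrix on pairs. -/
noncomputable def JOmat (m : ℕ) : Matrix (OO m) (OO m) ℚ :=
  Matrix.of fun _ _ => 1

/-- All-ones matrix on points. -/
noncomputable def Jmmat (m : ℕ) : Matrix (Fin m) (Fin m) ℚ :=
  Matrix.of fun _ _ => 1

lemma Tmat_row_sum (p : OO m) : ∑ i : Fin m, Tmat m p i = 2 := by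
  classical
  have h : ∑ i : Fin m, Tmat m p i = ∑ i ∈ Finset.univ ∩ p.1, (1 : ℚ) := by
    simp only [Tmat, Matrix.of_apply]
    rw [Finset.sum_ite_mem]
  rw [h, Finset.univ_inter, Finset.sum_const, p.2]
  norm_num

lemma Tmat_mul_transpose : Tmat m * (Tmat m)ᵀ = Nmat m := by
  classical
  ext p t
  simp only [Matrix.mul_apply, Matrix.transpose_apply, Tmat, Nmat, Matrix.of_apply]
  have h : ∀ i : Fin m, (if i ∈ p.1 then (1:ℚ) else 0) * (if i ∈ t.1 then 1 else 0)
      = if i ∈ p.1 ∩ t.1 then 1 else 0 := by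
    intro i
    by_cases h1 : i ∈ p.1 <;> by_cases h2 : i ∈ t.1 <;>
      simp [h1, h2, Finset.mem_inter]
  rw [Finset.sum_congr rfl fun i _ => h i, Finset.sum_ite_mem, Finset.univ_inter,
    Finset.sum_const]
  simp

lemma card_inter_eq_two_iff {p t : OO m} : (p.1 ∩ t.1).card = 2 ↔ p = t := by
  constructor
  · intro h
    have h1 : p.1 ∩ t.1 = p.1 :=
      Finset.eq_of_subset_of_card_le Finset.inter_subset_left (by rw [h, p.2])
    have h2 : p.1 ∩ t.1 = t.1 :=
      Finset.eq_of_subset_of_card_le Finset.inter_subset_right (by rw [h, t.2])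
    exact Subtype.ext (h1 ▸ h2)
  · rintro rfl
    rw [Finset.inter_self, p.2]

lemma card_inter_le_two (p t : OO m) : (p.1 ∩ t.1).card ≤ 2 := by
  calc (p.1 ∩ t.1).card ≤ p.1.card := Finset.card_le_card Finset.inter_subset_left
    _ = 2 := p.2

lemma Nmat_eq : Nmat m = Bmat m + (2 : ℚ) • (1 : Matrix (OO m) (OO m) ℚ) := by
  classical
  ext p t
  simp only [Nmat, Bmat, Matrix.add_apply, Matrix.smul_apply, Matrix.one_apply,
    Matrix.of_apply, smul_eq_mul]
  by_cases hpt : p = t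
  · subst hpt
    have h2 : (p.1 ∩ p.1).card = 2 := by rw [Finset.inter_self, p.2]
    rw [h2, if_pos rfl]
    norm_num
  · have h2 : (p.1 ∩ t.1).card ≠ 2 := fun h => hpt (card_inter_eq_two_iff.mp h)
    have hle := card_inter_le_two p t
    rw [if_neg hpt]
    by_cases h1 : (p.1 ∩ t.1).card = 1
    · rw [h1, if_pos rfl]; norm_num
    · have h0 : (p.1 ∩ t.1).card = 0 := by omega
      rw [h0, if_neg (by omega)]
      norm_num

lemma count_pairs_mem (i j : Fin m) :
    (∑ p : OO m, (if i ∈ p.1 ∧ j ∈ p.1 then (1:ℚ) else 0))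
      = if i = j then (m : ℚ) - 1 else 1 := by
  classical
  have hconv : (∑ p : OO m, (if i ∈ p.1 ∧ j ∈ p.1 then (1:ℚ) else 0))
      = ∑ p ∈ Finset.univ.powersetCard 2, (if i ∈ p ∧ j ∈ p then (1:ℚ) else 0) :=
    (Finset.sum_subtype (Finset.univ.powersetCard 2)
      (fun p => Finset.mem_powersetCard_univ)
      (fun p => if i ∈ p ∧ j ∈ p then (1:ℚ) else 0)).symm
  rw [hconv, Finset.sum_boole]
  by_cases hij : i = j
  · subst hij
    rw [if_pos rfl]
    have hfe : ((Finset.univ.powersetCard 2).filter fun p => i ∈ p ∧ i ∈ p)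
        = (Finset.univ.powersetCard 2).filter fun p => i ∈ p := by
      simp
    have hcard : (((Finset.univ : Finset (Fin m)).powersetCard 2).filter
        fun p => i ∈ p).card = (((Finset.univ.erase i)).powersetCard 1).card := by
      refine Finset.card_bij' (fun p _ => p.erase i) (fun s _ => insert i s) ?_ ?_ ?_ ?_
      · intro p hp
        rw [Finset.mem_filter, Finset.mem_powersetCard_univ] at hp
        rw [Finset.mem_powersetCard]
        exact ⟨Finset.erase_subset_erase i (Finset.subset_univ p),
          by rw [Finset.card_erase_of_mem hp.2, hp.1]⟩
      · intro s hs
        rw [Finset.mem_powersetCard] at hs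
        have hnotin : i ∉ s := fun hmem =>
          (Finset.notMem_erase i Finset.univ) (hs.1 hmem)
        rw [Finset.mem_filter, Finset.mem_powersetCard_univ]
        exact ⟨by rw [Finset.card_insert_of_notMem hnotin, hs.2],
          Finset.mem_insert_self _ _⟩
      · intro p hp
        rw [Finset.mem_filter] at hp
        exact Finset.insert_erase hp.2
      · intro s hs
        rw [Finset.mem_powersetCard] at hs
        exact Finset.erase_insert fun hmem => (Finset.notMem_erase i Finset.univ) (hs.1 hmem)
    have hm1 : 1 ≤ m := i.pos
    rw [hfe, hcard, Finset.card_powersetCard, Finset.card_erase_of_mem (Finset.mem_univ i),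
      Finset.card_univ, Fintype.card_fin, Nat.choose_one_right]
    push_cast [hm1]
    ring
  · rw [if_neg hij]
    have hfe : ((Finset.univ.powersetCard 2).filter fun p => i ∈ p ∧ j ∈ p)
        = {({i, j} : Finset (Fin m))} := by
      ext p
      simp only [Finset.mem_filter, Finset.mem_powersetCard_univ, Finset.mem_singleton]
      constructor
      · rintro ⟨hc, hi, hj'⟩
        refine (Finset.eq_of_subset_of_card_le ?_ ?_).symm
        · intro x hx
          rcases Finset.mem_insert.mp hx with rfl | hx
          · exact hi
          · rw [Finset.mem_singleton] at hx; subst hx; exact hj'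
        · rw [hc, Finset.card_pair hij]
      · rintro rfl
        exact ⟨Finset.card_pair hij, Finset.mem_insert_self _ _,
          Finset.mem_insert_of_mem (Finset.mem_singleton_self _)⟩
    rw [hfe, Finset.card_singleton]
    norm_num

lemma transpose_mul_Tmat : (Tmat m)ᵀ * Tmat m
    = Jmmat m + ((m:ℚ) - 2) • (1 : Matrix (Fin m) (Fin m) ℚ) := by
  classical
  ext i j
  simp only [Matrix.mul_apply, Matrix.transpose_apply, Tmat, Matrix.of_apply]
  have h : ∀ p : OO m, (if i ∈ p.1 then (1:ℚ) else 0) * (if j ∈ p.1 then 1 else 0)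
      = if i ∈ p.1 ∧ j ∈ p.1 then 1 else 0 := fun p => by
    by_cases h1 : i ∈ p.1 <;> by_cases h2 : j ∈ p.1 <;> simp [h1, h2]
  rw [Finset.sum_congr rfl fun p _ => h p, count_pairs_mem]
  simp only [Jmmat, Matrix.add_apply, Matrix.smul_apply, Matrix.one_apply,
    Matrix.of_apply, smul_eq_mul]
  by_cases hij : i = j
  · rw [if_pos hij, if_pos hij]; ring
  · rw [if_neg hij, if_neg hij]; ring

lemma Jm_mul_Jm : Jmmat m * Jmmat m = (m:ℚ) • Jmmat m := by
  ext i j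
  simp [Jmmat, Matrix.mul_apply]

lemma T_Jm_T : Tmat m * Jmmat m * (Tmat m)ᵀ = (4:ℚ) • JOmat m := by
  ext p t
  simp only [Matrix.mul_apply, Matrix.smul_apply, Matrix.transpose_apply, JOmat,
    Matrix.of_apply, smul_eq_mul]
  have h1 : ∀ j, (∑ i, Tmat m p i * Jmmat m i j) = 2 := fun j => by
    simp only [Jmmat, Matrix.of_apply, mul_one]
    exact Tmat_row_sum p
  rw [Finset.sum_congr rfl fun j _ => by rw [h1 j]]
  rw [← Finset.mul_sum, Tmat_row_sum]
  norm_num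

lemma N_sq : Nmat m * Nmat m
    = (4:ℚ) • JOmat m + ((m:ℚ) - 2) • Nmat m := by
  have h1 : Nmat m * Nmat m = Tmat m * ((Tmat m)ᵀ * Tmat m) * (Tmat m)ᵀ := by
    rw [← Tmat_mul_transpose]
    simp only [Matrix.mul_assoc]
  rw [h1, transpose_mul_Tmat]
  simp only [Matrix.mul_add, Matrix.add_mul, Matrix.mul_smul, Matrix.smul_mul,
    Matrix.mul_one, Matrix.one_mul]
  rw [T_Jm_T, Tmat_mul_transpose]

lemma N_mul_JO : Nmat m * JOmat m = (2*(m:ℚ) - 2) • JOmat m := by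
  have hJO : JOmat m = (4:ℚ)⁻¹ • (Tmat m * Jmmat m * (Tmat m)ᵀ) := by
    rw [T_Jm_T, smul_smul]
    norm_num
  have hmid : ((Tmat m)ᵀ * Tmat m) * Jmmat m = (2*(m:ℚ) - 2) • Jmmat m := by
    rw [transpose_mul_Tmat, Matrix.add_mul, Matrix.smul_mul, Matrix.one_mul, Jm_mul_Jm]
    rw [← add_smul]
    congr 1
    ring
  have h2 : Nmat m * JOmat m
      = (4:ℚ)⁻¹ • (Tmat m * (((Tmat m)ᵀ * Tmat m) * Jmmat m) * (Tmat m)ᵀ) := by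
    rw [hJO, Matrix.mul_smul, ← Tmat_mul_transpose]
    simp only [Matrix.mul_assoc]
  rw [h2, hmid, Matrix.mul_smul, Matrix.smul_mul, T_Jm_T, smul_smul, smul_smul]
  congr 1
  ring

lemma N_transpose : (Nmat m)ᵀ = Nmat m := by
  ext p t
  simp [Nmat, Finset.inter_comm]

lemma JO_transpose : (JOmat m)ᵀ = JOmat m := by
  ext p t
  simp [JOmat]

lemma JO_mul_N : JOmat m * Nmat m = (2*(m:ℚ) - 2) • JOmat m := by
  have h := congrArg Matrix.transpose (N_mul_JO (m := m))
  rwa [Matrix.transpose_mul, N_transpose, JO_transpose, Matrix.transpose_smul,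
    JO_transpose] at h

lemma Bmat_eq : Bmat m = Nmat m - (2:ℚ) • (1 : Matrix (OO m) (OO m) ℚ) := by
  rw [Nmat_eq]
  abel

lemma B_sq : Bmat m * Bmat m
    = (4:ℚ) • JOmat m + ((m:ℚ) - 6) • Bmat m + (2*(m:ℚ) - 8) • (1 : Matrix (OO m) (OO m) ℚ) := by
  rw [Bmat_eq]
  simp only [Matrix.sub_mul, Matrix.mul_sub, Matrix.smul_mul, Matrix.mul_smul,
    Matrix.one_mul, Matrix.mul_one]
  rw [N_sq]
  module

lemma JO_mul_B : JOmat m * Bmat m = (2*(m:ℚ) - 4) • JOmat m := by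
  rw [Bmat_eq]
  simp only [Matrix.mul_sub, Matrix.mul_smul, Matrix.mul_one]
  rw [JO_mul_N]
  module

lemma Dmat_eq (hm2 : (m:ℚ) - 2 ≠ 0) (hm4 : (m:ℚ) - 4 ≠ 0) :
    Dmat m = (-((m:ℚ)-6)/(2*((m:ℚ)-4))) • (1 : Matrix (OO m) (OO m) ℚ)
      + (1/(2*((m:ℚ)-4))) • Bmat m + (-1/(((m:ℚ)-4)*((m:ℚ)-2))) • JOmat m := by
  classical
  ext p t
  simp only [Dmat, Bmat, JOmat, Matrix.add_apply, Matrix.smul_apply, Matrix.one_apply,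
    Matrix.of_apply, smul_eq_mul]
  by_cases hpt : p = t
  · have h2 : (p.1 ∩ t.1).card = 2 := card_inter_eq_two_iff.mpr hpt
    rw [if_pos hpt, if_pos hpt, if_neg (by rw [h2]; norm_num)]
    field_simp
    ring
  · rw [if_neg hpt, if_neg hpt]
    by_cases h1 : (p.1 ∩ t.1).card = 1
    · rw [if_pos h1, if_pos h1]
      field_simp
      ring
    · rw [if_neg h1, if_neg h1]
      field_simp
      ring

lemma Dmat_mul_Bmat (hm2 : (m:ℚ) - 2 ≠ 0) (hm4 : (m:ℚ) - 4 ≠ 0) :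
    Dmat m * Bmat m = 1 := by
  rw [Dmat_eq hm2 hm4]
  simp only [Matrix.add_mul, Matrix.smul_mul, Matrix.one_mul]
  rw [B_sq, JO_mul_B]
  match_scalars
  · field_simp
    ring
  · field_simp
    ring
  · field_simp
    ring

lemma Bmat_mul_Dmat (hm2 : (m:ℚ) - 2 ≠ 0) (hm4 : (m:ℚ) - 4 ≠ 0) :
    Bmat m * Dmat m = 1 :=
  mul_eq_one_comm.mp (Dmat_mul_Bmat hm2 hm4)

end AuxMatrices

section AuxPartitions

open Finset

variable {m q : ℕ}

lemma pairPart_mem (hq : 2 ≤ q) (hm3 : 3 ≤ m) (p : OO m) :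
    ({p.1, p.1ᶜ} : Ptn m) ∈ Pset m q := by
  classical
  have hpc : (p.1ᶜ).card = m - 2 := by
    rw [Finset.card_compl, p.2, Fintype.card_fin]
  refine ⟨⟨?_, ?_⟩, ?_⟩
  · intro c hc
    rcases Finset.mem_insert.mp hc with rfl | hc
    · exact Finset.card_pos.mp (by rw [p.2]; norm_num)
    · rw [Finset.mem_singleton] at hc; subst hc
      exact Finset.card_pos.mp (by rw [hpc]; omega)
  · intro i
    by_cases hip : i ∈ p.1
    · refine ⟨p.1, ⟨Finset.mem_insert_self _ _, hip⟩, ?_⟩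
      rintro d ⟨hd, hid⟩
      rcases Finset.mem_insert.mp hd with rfl | hd
      · rfl
      · rw [Finset.mem_singleton] at hd; subst hd
        exact absurd hip (Finset.mem_compl.mp hid)
    · refine ⟨p.1ᶜ, ⟨Finset.mem_insert_of_mem (Finset.mem_singleton_self _),
        Finset.mem_compl.mpr hip⟩, ?_⟩
      rintro d ⟨hd, hid⟩
      rcases Finset.mem_insert.mp hd with rfl | hd
      · exact absurd hid hip
      · rw [Finset.mem_singleton] at hd; exact hd
  · have h2 : ({p.1, p.1ᶜ} : Ptn m).card ≤ 2 :=
      le_trans (Finset.card_insert_le _ _) (by simp)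
    omega

/-- The partition `{p, pᶜ}` as an element of `PP m q`. -/
noncomputable def pairPP (hq : 2 ≤ q) (hm3 : 3 ≤ m) (p : OO m) : PP m q :=
  ⟨{p.1, p.1ᶜ}, pairPart_mem hq hm3 p⟩

lemma pairPP_inj (hq : 2 ≤ q) (hm3 : 3 ≤ m) (hm4 : m ≠ 4) :
    Function.Injective (pairPP (m := m) (q := q) hq hm3) := by
  intro p p' h
  have hv : ({p.1, p.1ᶜ} : Ptn m) = {p'.1, p'.1ᶜ} := congrArg Subtype.val h
  have hmem : p.1 ∈ ({p'.1, p'.1ᶜ} : Ptn m) := hv ▸ Finset.mem_insert_self _ _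
  rcases Finset.mem_insert.mp hmem with heq | hmem
  · exact Subtype.ext heq
  · rw [Finset.mem_singleton] at hmem
    exfalso
    have hc : p.1.card = (p'.1ᶜ).card := by rw [hmem]
    rw [p.2, Finset.card_compl, p'.2, Fintype.card_fin] at hc
    omega

lemma mem_P2_iff (hq : 2 ≤ q) (hm3 : 3 ≤ m) (α : PP m q) :
    α.1 ∈ P2set m ↔ ∃ p : OO m, α = pairPP hq hm3 p := by
  constructor
  · rintro ⟨p, hp2, hα⟩
    exact ⟨⟨p, hp2⟩, Subtype.ext hα⟩
  · rintro ⟨p, rfl⟩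
    exact ⟨p.1, p.2, rfl⟩

lemma Delta_pairPP (hq : 2 ≤ q) (hm3 : 3 ≤ m) (p t : OO m) :
    Delta (pairPP hq hm3 p) t = Bmat m t p := by
  classical
  simp only [Delta, Bmat, Matrix.of_apply, pairPP]
  by_cases h : ∃ c ∈ ({p.1, p.1ᶜ} : Ptn m), t.1 ⊆ c
  · obtain ⟨c, hc, hsub⟩ := h
    have hne : (t.1 ∩ p.1).card ≠ 1 := by
      rcases Finset.mem_insert.mp hc with rfl | hc
      · have he : t.1 ∩ p.1 = t.1 := Finset.inter_eq_left.mpr hsub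
        rw [he, t.2]; norm_num
      · rw [Finset.mem_singleton] at hc; subst hc
        have he : t.1 ∩ p.1 = ∅ := by
          apply Finset.eq_empty_of_forall_notMem
          intro x hx
          rw [Finset.mem_inter] at hx
          exact Finset.mem_compl.mp (hsub hx.1) hx.2
        rw [he]
        norm_num
    exact (if_pos (⟨c, hc, hsub⟩ : ∃ c ∈ ({p.1, p.1ᶜ} : Ptn m), t.1 ⊆ c)).trans (if_neg hne).symm
  · have h1 : (t.1 ∩ p.1).card = 1 := by
      push_neg at h
      have h2 : (t.1 ∩ p.1).card ≠ 2 := by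
        intro hc
        have := card_inter_eq_two_iff.mp hc
        exact h p.1 (Finset.mem_insert_self _ _) (by rw [this])
      have h0 : (t.1 ∩ p.1).card ≠ 0 := by
        intro hc
        refine h p.1ᶜ (Finset.mem_insert_of_mem (Finset.mem_singleton_self _)) ?_
        intro x hx
        rw [Finset.mem_compl]
        intro hxp
        have : x ∈ t.1 ∩ p.1 := Finset.mem_inter.mpr ⟨hx, hxp⟩
        rw [Finset.card_eq_zero.mp hc] at this
        exact absurd this (Finset.notMem_empty x)
      have hle := card_inter_le_two t p
      omega
    exact (if_neg h).trans (if_pos h1).symm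

/-- Functions supported on `P₂` with coefficients `y`. -/
noncomputable def iotaV (m q : ℕ) (y : OO m → ℚ) : PP m q → ℚ :=
  fun α => ∑ p : OO m, y p * (if α.1 = ({p.1, p.1ᶜ} : Ptn m) then 1 else 0)

lemma iotaV_pairPP (hq : 2 ≤ q) (hm3 : 3 ≤ m) (hm4 : m ≠ 4) (y : OO m → ℚ) (p₀ : OO m) :
    iotaV m q y (pairPP hq hm3 p₀) = y p₀ := by
  classical
  unfold iotaV
  rw [Finset.sum_eq_single p₀]
  · simp [pairPP]
  · intro p _ hne
    rw [if_neg, mul_zero]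
    intro hcond
    exact hne (pairPP_inj hq hm3 hm4 (Subtype.ext (hcond.symm ▸ rfl : (pairPP hq hm3 p₀).1
      = (pairPP hq hm3 p).1))).symm
  · intro hn
    exact absurd (Finset.mem_univ p₀) hn

lemma iotaV_not_P2 (y : OO m → ℚ) (α : PP m q) (hα : α.1 ∉ P2set m) :
    iotaV m q y α = 0 := by
  unfold iotaV
  apply Finset.sum_eq_zero
  intro p _
  rw [if_neg, mul_zero]
  intro hcond
  exact hα ⟨p.1, p.2, hcond⟩

lemma xi_eq_iotaV (x : OO m → ℚ) :
    xi m q x = iotaV m q fun p => ∑ r : OO m, x r * Dmat m r p := by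
  funext α
  unfold xi iotaV
  simp only [Finset.mul_sum, Finset.sum_mul]
  rw [Finset.sum_comm]
  refine Finset.sum_congr rfl fun p _ => Finset.sum_congr rfl fun r _ => by ring

lemma WLin_apply (η : PP m q → ℚ) (t : OO m) :
    WLin m q η t = ∑ α : PP m q, η α * Delta α t := rfl

lemma WLin_iotaV (hq : 2 ≤ q) (hm3 : 3 ≤ m) (hm4 : m ≠ 4) (y : OO m → ℚ) :
    WLin m q (iotaV m q y) = fun t => ∑ p : OO m, y p * Bmat m t p := by
  classical
  funext t
  rw [WLin_apply]
  have h1 : ∑ α : PP m q, iotaV m q y α * Delta α t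
      = ∑ α ∈ Finset.univ.image (pairPP (m := m) (q := q) hq hm3),
          iotaV m q y α * Delta α t := by
    symm
    apply Finset.sum_subset (Finset.subset_univ _)
    intro α _ hα
    have hnot : α.1 ∉ P2set m := by
      intro hmem
      obtain ⟨p, rfl⟩ := (mem_P2_iff hq hm3 α).mp hmem
      exact hα (Finset.mem_image_of_mem _ (Finset.mem_univ p))
    rw [iotaV_not_P2 y α hnot, zero_mul]
  rw [h1, Finset.sum_image (fun p _ p' _ h => pairPP_inj hq hm3 hm4 h)]
  refine Finset.sum_congr rfl fun p _ => ?_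
  rw [iotaV_pairPP hq hm3 hm4, Delta_pairPP hq hm3]

lemma WLin_xi (hq : 2 ≤ q) (hm3 : 3 ≤ m) (hm4 : m ≠ 4)
    (hm2' : (m:ℚ) - 2 ≠ 0) (hm4' : (m:ℚ) - 4 ≠ 0) (x : OO m → ℚ) :
    WLin m q (xi m q x) = x := by
  classical
  rw [xi_eq_iotaV, WLin_iotaV hq hm3 hm4]
  funext t
  have hDB : Dmat m * Bmat m = 1 := Dmat_mul_Bmat hm2' hm4'
  have hsymm : ∀ t p : OO m, Bmat m t p = Bmat m p t := fun t p => by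
    simp [Bmat, Finset.inter_comm]
  have e1 : ∑ p : OO m, (∑ r : OO m, x r * Dmat m r p) * Bmat m t p
      = ∑ p : OO m, ∑ r : OO m, x r * (Dmat m r p * Bmat m p t) := by
    refine Finset.sum_congr rfl fun p _ => ?_
    rw [Finset.sum_mul, hsymm t p]
    exact Finset.sum_congr rfl fun r _ => by ring
  show ∑ p : OO m, (∑ r : OO m, x r * Dmat m r p) * Bmat m t p = x t
  rw [e1, Finset.sum_comm]
  have e2 : ∀ r : OO m, ∑ p : OO m, x r * (Dmat m r p * Bmat m p t)
      = x r * (1 : Matrix (OO m) (OO m) ℚ) r t := by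
    intro r
    rw [← Finset.mul_sum, ← Matrix.mul_apply, hDB]
  rw [Finset.sum_congr rfl fun r _ => e2 r]
  simp [Matrix.one_apply, mul_ite]

lemma xi_mem_V0 (x : OO m → ℚ) : xi m q x ∈ V0 m q := by
  intro α hα
  rw [xi_eq_iotaV, iotaV_not_P2 _ α hα]

lemma V0_kerW_inj (hq : 2 ≤ q) (hm3 : 3 ≤ m) (hm4 : m ≠ 4)
    (hm2' : (m:ℚ) - 2 ≠ 0) (hm4' : (m:ℚ) - 4 ≠ 0)
    (v : PP m q → ℚ) (hv : v ∈ V0 m q) (hW : WLin m q v = 0) : v = 0 := by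
  classical
  have hDB : Dmat m * Bmat m = 1 := Dmat_mul_Bmat hm2' hm4'
  set y : OO m → ℚ := fun p => v (pairPP hq hm3 p) with hy
  have hrep : v = iotaV m q y := by
    funext α
    by_cases hα : α.1 ∈ P2set m
    · obtain ⟨p, rfl⟩ := (mem_P2_iff hq hm3 α).mp hα
      rw [iotaV_pairPP hq hm3 hm4]
    · rw [hv α hα, iotaV_not_P2 _ α hα]
  have hWy : ∀ t : OO m, ∑ p : OO m, y p * Bmat m t p = 0 := by
    intro t
    have h0 := congrFun hW t
    rw [hrep, WLin_iotaV hq hm3 hm4] at h0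
    exact h0
  have hzero : ∀ r : OO m, y r = 0 := by
    intro r
    have h1 : ∑ t : OO m, Dmat m r t * ∑ p : OO m, y p * Bmat m t p = 0 := by
      rw [Finset.sum_congr rfl fun t _ => by rw [hWy t, mul_zero]]
      exact Finset.sum_const_zero
    have h2 : ∑ t : OO m, Dmat m r t * ∑ p : OO m, y p * Bmat m t p
        = ∑ p : OO m, y p * (Dmat m * Bmat m) r p := by
      have e1 : ∀ t : OO m, Dmat m r t * ∑ p : OO m, y p * Bmat m t p
          = ∑ p : OO m, y p * (Dmat m r t * Bmat m t p) := by
        intro t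
        rw [Finset.mul_sum]
        exact Finset.sum_congr rfl fun p _ => by ring
      rw [Finset.sum_congr rfl fun t _ => e1 t, Finset.sum_comm]
      refine Finset.sum_congr rfl fun p _ => ?_
      rw [← Finset.mul_sum, Matrix.mul_apply]
    rw [h2, hDB] at h1
    simpa [Matrix.one_apply, mul_ite] using h1
  rw [hrep]
  funext α
  simp [iotaV, hzero]

end AuxPartitions

/-- for `q ≥ 2` and `m ≥ 5` or `m = 3`, `F(P,ℚ) = V₀ ⊕ Ker W`: every `η`
decomposes uniquely as `η = η₀ + η₁` with `η₀ ∈ Ker W` and `η₁ ∈ V₀`. -/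
theorem direct_sum_V0_kerW (m q : ℕ) (hq : 2 ≤ q) (hm : 5 ≤ m ∨ m = 3)
    (η : PP m q → ℚ) :
    ∃! d : (PP m q → ℚ) × (PP m q → ℚ),
      d.1 ∈ LinearMap.ker (WLin m q) ∧ d.2 ∈ V0 m q ∧ η = d.1 + d.2 := by
  classical
  have hm3 : 3 ≤ m := by omega
  have hm4 : m ≠ 4 := by omega
  have hm2' : (m:ℚ) - 2 ≠ 0 := by
    have h : (m:ℚ) ≠ 2 := by exact_mod_cast (show m ≠ 2 by omega)
    intro hc; exact h (by linarith)
  have hm4' : (m:ℚ) - 4 ≠ 0 := by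
    have h : (m:ℚ) ≠ 4 := by exact_mod_cast hm4
    intro hc; exact h (by linarith)
  set η₁ : PP m q → ℚ := xi m q (WLin m q η) with hη₁
  have hWxi : WLin m q η₁ = WLin m q η := WLin_xi hq hm3 hm4 hm2' hm4' _
  refine ⟨(η - η₁, η₁), ⟨?_, xi_mem_V0 _, ?_⟩, ?_⟩
  · rw [LinearMap.mem_ker, map_sub, hWxi, sub_self]
  · exact (sub_add_cancel η η₁).symm
  · rintro ⟨d1, d2⟩ ⟨hd1, hd2, hdsum⟩
    have hWd2 : WLin m q d2 = WLin m q η := by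
      have h := congrArg (WLin m q) hdsum
      rw [map_add, LinearMap.mem_ker.mp hd1, zero_add] at h
      exact h.symm
    have hdiff : d2 - η₁ = 0 := by
      apply V0_kerW_inj hq hm3 hm4 hm2' hm4'
      · intro α hα
        have h1 : d2 α = 0 := hd2 α hα
        have h2 : η₁ α = 0 := xi_mem_V0 (m := m) (q := q) (WLin m q η) α hα
        simp [Pi.sub_apply, h1, h2]
      · rw [map_sub, hWd2, hWxi, sub_self]
    have hd2e : d2 = η₁ := by rwa [sub_eq_zero] at hdiff
    have hd1e : d1 = η - η₁ := by
      rw [← hd2e, hdsum]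
      abel
    rw [Prod.ext_iff]
    exact ⟨hd1e, hd2e⟩
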